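/- Assume Q_Δ and A are invertible and define T_S(∞) = I_L ⊗ (I_M − Q_Δ^{-1} Q) ⊗ I_N. Then there exist constants c > 0 and μ* > 0 such that for all μ ≥ μ*, the preconditioner P̂(μ) is invertible and ‖T_S(μ) − T_S(∞)‖ ≤ c / μ. -/

import Mathlib

/-!
STATEMENT 9: Assume Q_Δ and A are invertible and define
T_S(∞) = I_L ⊗ (I_M − Q_Δ⁻¹ Q) ⊗ I_N. Then there exist c > 0 and μ* > 0 such that
for all μ ≥ μ*, P̂(μ) is invertible and ‖T_S(μ) − T_S(∞)‖ ≤ c / μ.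
-/

noncomputable section

open Matrix
open scoped Kronecker

/-- Complexification of a real matrix. -/
def cmplx {m n : Type*} (A : Matrix m n ℝ) : Matrix m n ℂ := A.map (fun x => (x : ℂ))

/-- The matrix `E` with ones on the first subdiagonal and zeros elsewhere. -/
def Emat (L : ℕ) : Matrix (Fin L) (Fin L) ℂ :=
  Matrix.of fun i j => if (i : ℕ) = (j : ℕ) + 1 then 1 else 0

/-- The matrix `N_M` whose last column consists of ones, all other entries zero. -/
def Nmat (M : ℕ) : Matrix (Fin M) (Fin M) ℂ :=
  Matrix.of fun _ j => if (j : ℕ) = M - 1 then 1 else 0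

/-- `H = N_M ⊗ I_N`. -/
def Hmat (M N : ℕ) : Matrix (Fin M × Fin N) (Fin M × Fin N) ℂ :=
  Nmat M ⊗ₖ (1 : Matrix (Fin N) (Fin N) ℂ)

/-- `E ⊗ H`. -/
def EH (L M N : ℕ) : Matrix (Fin L × Fin M × Fin N) (Fin L × Fin M × Fin N) ℂ :=
  Emat L ⊗ₖ Hmat M N

/-- The composite collocation matrix `C(μ) = I − μ (I_L ⊗ Q ⊗ A) − E ⊗ H`. -/
def Cmat (L : ℕ) {M N : ℕ} (Q : Matrix (Fin M) (Fin M) ℝ) (A : Matrix (Fin N) (Fin N) ℂ)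
    (μ : ℝ) : Matrix (Fin L × Fin M × Fin N) (Fin L × Fin M × Fin N) ℂ :=
  1 - (μ : ℂ) • ((1 : Matrix (Fin L) (Fin L) ℂ) ⊗ₖ (cmplx Q ⊗ₖ A)) - EH L M N

/-- The approximative block Jacobi preconditioner `P̂(μ) = I − μ (I_L ⊗ Q_Δ ⊗ A)`. -/
def Phat (L : ℕ) {M N : ℕ} (QΔ : Matrix (Fin M) (Fin M) ℝ) (A : Matrix (Fin N) (Fin N) ℂ)
    (μ : ℝ) : Matrix (Fin L × Fin M × Fin N) (Fin L × Fin M × Fin N) ℂ :=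
  1 - (μ : ℂ) • ((1 : Matrix (Fin L) (Fin L) ℂ) ⊗ₖ (cmplx QΔ ⊗ₖ A))

/-- The smoother iteration matrix `T_S(μ) = I − P̂(μ)⁻¹ C(μ)`. -/
def Tsmooth (L : ℕ) {M N : ℕ} (Q QΔ : Matrix (Fin M) (Fin M) ℝ)
    (A : Matrix (Fin N) (Fin N) ℂ) (μ : ℝ) :
    Matrix (Fin L × Fin M × Fin N) (Fin L × Fin M × Fin N) ℂ :=
  1 - (Phat L QΔ A μ)⁻¹ * Cmat L Q A μ

/-- The operator norm induced by the Euclidean vector norm. -/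
def opNorm {n : Type*} [Fintype n] [DecidableEq n] (A : Matrix n n ℂ) : ℝ :=
  ‖Matrix.toEuclideanCLM (𝕜 := ℂ) A‖

/-! ### Auxiliary lemmas -/

section Aux

variable {l m n p : Type*}

lemma kron_sub_right (A : Matrix l m ℂ) (B C : Matrix n p ℂ) :
    A ⊗ₖ (B - C) = A ⊗ₖ B - A ⊗ₖ C := by
  ext i j
  simp [Matrix.kroneckerMap_apply, Matrix.sub_apply, mul_sub]

lemma kron_sub_left (A B : Matrix l m ℂ) (C : Matrix n p ℂ) :
    (A - B) ⊗ₖ C = A ⊗ₖ C - B ⊗ₖ C := by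
  ext i j
  simp [Matrix.kroneckerMap_apply, Matrix.sub_apply, sub_mul]

lemma cmplx_eq_map (X : Matrix m n ℝ) : cmplx X = X.map (algebraMap ℝ ℂ) := by
  ext i j
  simp [cmplx, Matrix.map_apply]

variable [Fintype m] [DecidableEq m]

lemma cmplx_one : cmplx (1 : Matrix m m ℝ) = 1 := by
  rw [cmplx_eq_map, Matrix.map_one _ (map_zero _) (map_one _)]

lemma cmplx_mul (X Y : Matrix m m ℝ) : cmplx (X * Y) = cmplx X * cmplx Y := by
  simp only [cmplx_eq_map]
  exact Matrix.map_mul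

lemma cmplx_sub (X Y : Matrix m m ℝ) : cmplx (X - Y) = cmplx X - cmplx Y := by
  ext i j
  simp [cmplx, Matrix.sub_apply]

end Aux

/-- The key abstract quantitative estimate, in a complete normed `ℂ`-algebra. -/
lemma key_bound {𝔸 : Type*} [NormedRing 𝔸] [NormOneClass 𝔸] [NormedAlgebra ℂ 𝔸]
    [CompleteSpace 𝔸] (b k e : 𝔸) (hb : IsUnit b) :
    ∃ c > (0:ℝ), ∃ μs > (0:ℝ), ∀ μ : ℝ, μs ≤ μ →
      IsUnit (1 - (μ:ℂ) • b) ∧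
      ‖(1 - Ring.inverse (1 - (μ:ℂ) • b) * (1 - (μ:ℂ) • k - e)) -
        (1 - Ring.inverse b * k)‖ ≤ c / μ := by
  set b' : 𝔸 := Ring.inverse b with hb'def
  have hbb' : b * b' = 1 := Ring.mul_inverse_cancel b hb
  have hb'b : b' * b = 1 := Ring.inverse_mul_cancel b hb
  refine ⟨2*‖b'‖ + 2*‖b'‖^2*‖k‖ + 2*‖b'‖*‖e‖ + 1, by positivity,
    2*‖b'‖ + 1, by positivity, ?_⟩
  intro μ hμ
  have hμ1 : (1:ℝ) ≤ μ := le_trans (by nlinarith [norm_nonneg b']) hμ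
  have hμ0 : (0:ℝ) < μ := lt_of_lt_of_le one_pos hμ1
  have hμc : (μ:ℂ) ≠ 0 := by
    simpa using hμ0.ne'
  have hnμ : ‖((μ:ℂ)⁻¹)‖ = μ⁻¹ := by
    rw [norm_inv, Complex.norm_real, Real.norm_eq_abs, abs_of_pos hμ0]
  set t : 𝔸 := (μ:ℂ)⁻¹ • b' with htdef
  have htn : ‖t‖ = μ⁻¹ * ‖b'‖ := by rw [htdef, norm_smul, hnμ]
  have ht2 : ‖t‖ ≤ 1/2 := by
    rw [htn, inv_mul_le_iff₀ hμ0]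
    nlinarith [norm_nonneg b']
  have ht1 : ‖t‖ < 1 := lt_of_le_of_lt ht2 (by norm_num)
  set u : 𝔸ˣ := Units.oneSub t ht1 with hudef
  have hu_val : (u:𝔸) = 1 - t := rfl
  have huinv : (↑u⁻¹:𝔸) = 1 + t * ↑u⁻¹ := by
    have h : (1 - t) * (↑u⁻¹:𝔸) = 1 := by rw [← hu_val]; exact u.mul_inv
    rw [sub_mul, one_mul] at h
    exact sub_eq_iff_eq_add.mp h
  have hnuinv : ‖(↑u⁻¹:𝔸)‖ ≤ 2 := by
    have h1 : ‖(↑u⁻¹:𝔸)‖ ≤ 1 + ‖t‖ * ‖(↑u⁻¹:𝔸)‖ := by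
      calc ‖(↑u⁻¹:𝔸)‖ = ‖1 + t * (↑u⁻¹:𝔸)‖ := by rw [← huinv]
        _ ≤ ‖(1:𝔸)‖ + ‖t * (↑u⁻¹:𝔸)‖ := norm_add_le _ _
        _ ≤ 1 + ‖t‖ * ‖(↑u⁻¹:𝔸)‖ := by
            rw [norm_one]
            exact add_le_add_right (norm_mul_le _ _) 1
    nlinarith [norm_nonneg (↑u⁻¹:𝔸), ht2]
  have hnuinv1 : ‖(1:𝔸) - ↑u⁻¹‖ ≤ 2 * ‖t‖ := by
    have h : (↑u⁻¹:𝔸) - 1 = t * ↑u⁻¹ := by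
      conv_lhs => rw [huinv]
      abel
    rw [norm_sub_rev, h]
    calc ‖t * (↑u⁻¹:𝔸)‖ ≤ ‖t‖ * ‖(↑u⁻¹:𝔸)‖ := norm_mul_le _ _
      _ ≤ ‖t‖ * 2 := mul_le_mul_of_nonneg_left hnuinv (norm_nonneg t)
      _ = 2 * ‖t‖ := mul_comm _ _
  set W : 𝔸 := (-(μ:ℂ)⁻¹) • (↑u⁻¹ * b') with hWdef
  have hbt : b * t = (μ:ℂ)⁻¹ • (1:𝔸) := by
    rw [htdef, mul_smul_comm, hbb']
  have hPfact : 1 - (μ:ℂ) • b = (-(μ:ℂ)) • (b * ↑u) := by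
    rw [hu_val, mul_sub, mul_one, hbt, smul_sub, smul_smul,
      show (-(μ:ℂ)) * (μ:ℂ)⁻¹ = -1 by field_simp]
    simp only [neg_smul, one_smul]
    abel
  have hPW : (1 - (μ:ℂ) • b) * W = 1 := by
    rw [hPfact, hWdef, smul_mul_smul_comm,
      show (-(μ:ℂ)) * (-(μ:ℂ)⁻¹) = 1 by field_simp, one_smul,
      mul_assoc, ← mul_assoc (↑u:𝔸), u.mul_inv, one_mul, hbb']
  have hWP : W * (1 - (μ:ℂ) • b) = 1 := by
    rw [hPfact, hWdef, smul_mul_smul_comm,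
      show (-(μ:ℂ)⁻¹) * (-(μ:ℂ)) = 1 by field_simp, one_smul,
      mul_assoc, ← mul_assoc b', hb'b, one_mul, u.inv_mul]
  have hUnit : IsUnit (1 - (μ:ℂ) • b) := ⟨⟨_, W, hPW, hWP⟩, rfl⟩
  have hinvP : Ring.inverse (1 - (μ:ℂ) • b) = W :=
    Ring.inverse_unit ⟨_, W, hPW, hWP⟩
  refine ⟨hUnit, ?_⟩
  rw [hinvP]
  have hWk : W * ((μ:ℂ) • k) = -(↑u⁻¹ * (b' * k)) := by
    rw [hWdef, smul_mul_smul_comm,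
      show (-(μ:ℂ)⁻¹) * (μ:ℂ) = -1 by field_simp, neg_one_smul, mul_assoc]
  have hId : (1 - W * (1 - (μ:ℂ) • k - e)) - (1 - b' * k)
      = -W + ((1:𝔸) - ↑u⁻¹) * (b' * k) + W * e := by
    rw [mul_sub, mul_sub, mul_one, hWk, sub_mul, one_mul]
    abel
  rw [hId]
  have hWn : ‖W‖ ≤ μ⁻¹ * (2 * ‖b'‖) := by
    rw [hWdef, norm_smul, norm_neg, hnμ]
    have h2 : ‖(↑u⁻¹:𝔸) * b'‖ ≤ 2 * ‖b'‖ :=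
      le_trans (norm_mul_le _ _) (by nlinarith [norm_nonneg b'])
    exact mul_le_mul_of_nonneg_left h2 (inv_nonneg.mpr hμ0.le)
  have h2n : ‖((1:𝔸) - ↑u⁻¹) * (b' * k)‖ ≤ (2 * (μ⁻¹ * ‖b'‖)) * (‖b'‖ * ‖k‖) := by
    calc ‖((1:𝔸) - ↑u⁻¹) * (b' * k)‖ ≤ ‖(1:𝔸) - ↑u⁻¹‖ * ‖b' * k‖ := norm_mul_le _ _
      _ ≤ (2 * ‖t‖) * (‖b'‖ * ‖k‖) := by
          apply mul_le_mul hnuinv1 (norm_mul_le _ _) (norm_nonneg _) (by positivity)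
      _ = (2 * (μ⁻¹ * ‖b'‖)) * (‖b'‖ * ‖k‖) := by rw [htn]
  have h3n : ‖W * e‖ ≤ (μ⁻¹ * (2 * ‖b'‖)) * ‖e‖ :=
    le_trans (norm_mul_le _ _) (mul_le_mul_of_nonneg_right hWn (norm_nonneg e))
  have hiμ : (0:ℝ) ≤ μ⁻¹ := inv_nonneg.mpr hμ0.le
  calc ‖-W + ((1:𝔸) - ↑u⁻¹) * (b' * k) + W * e‖
      ≤ ‖-W + ((1:𝔸) - ↑u⁻¹) * (b' * k)‖ + ‖W * e‖ := norm_add_le _ _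
    _ ≤ (‖-W‖ + ‖((1:𝔸) - ↑u⁻¹) * (b' * k)‖) + ‖W * e‖ := by
        exact add_le_add_left (norm_add_le _ _) _
    _ = (‖W‖ + ‖((1:𝔸) - ↑u⁻¹) * (b' * k)‖) + ‖W * e‖ := by rw [norm_neg]
    _ ≤ (μ⁻¹ * (2 * ‖b'‖) + (2 * (μ⁻¹ * ‖b'‖)) * (‖b'‖ * ‖k‖)) + (μ⁻¹ * (2 * ‖b'‖)) * ‖e‖ := by
        exact add_le_add (add_le_add hWn h2n) h3n
    _ ≤ (2*‖b'‖ + 2*‖b'‖^2*‖k‖ + 2*‖b'‖*‖e‖ + 1) / μ := by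
        rw [div_eq_mul_inv]
        nlinarith [norm_nonneg b', norm_nonneg k, norm_nonneg e, hiμ]

theorem stmt_9 (L M N : ℕ) (hL : 0 < L) (hM : 0 < M) (hN : 0 < N)
    (Q QΔ : Matrix (Fin M) (Fin M) ℝ) (A : Matrix (Fin N) (Fin N) ℂ)
    (hQΔ : IsUnit QΔ) (hA : IsUnit A) :
    ∃ c > (0 : ℝ), ∃ μs > (0 : ℝ), ∀ μ : ℝ, μs ≤ μ →
      IsUnit (Phat L QΔ A μ) ∧
      opNorm (Tsmooth L Q QΔ A μ -
          (1 : Matrix (Fin L) (Fin L) ℂ) ⊗ₖ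
            (cmplx ((1 : Matrix (Fin M) (Fin M) ℝ) - QΔ⁻¹ * Q) ⊗ₖ
              (1 : Matrix (Fin N) (Fin N) ℂ))) ≤ c / μ := by
  classical
  haveI : Nonempty (Fin L × Fin M × Fin N) := ⟨(⟨0, hL⟩, ⟨0, hM⟩, ⟨0, hN⟩)⟩
  haveI : Nontrivial (EuclideanSpace ℂ (Fin L × Fin M × Fin N)) :=
    (WithLp.equiv 2 ((Fin L × Fin M × Fin N) → ℂ)).nontrivial
  -- complexified building blocks
  have hQΔdet : IsUnit (cmplx QΔ).det := by
    rw [cmplx_eq_map,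
      show QΔ.map ⇑(algebraMap ℝ ℂ) = (algebraMap ℝ ℂ).mapMatrix QΔ from rfl,
      ← RingHom.map_det]
    exact ((Matrix.isUnit_iff_isUnit_det QΔ).mp hQΔ).map _
  have hAdet : IsUnit A.det := (Matrix.isUnit_iff_isUnit_det A).mp hA
  set Bm : Matrix (Fin L × Fin M × Fin N) (Fin L × Fin M × Fin N) ℂ :=
    (1 : Matrix (Fin L) (Fin L) ℂ) ⊗ₖ (cmplx QΔ ⊗ₖ A) with hBm
  set Km : Matrix (Fin L × Fin M × Fin N) (Fin L × Fin M × Fin N) ℂ :=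
    (1 : Matrix (Fin L) (Fin L) ℂ) ⊗ₖ (cmplx Q ⊗ₖ A) with hKm
  have hBunit : IsUnit Bm := by
    rw [Matrix.isUnit_iff_isUnit_det, hBm, Matrix.det_kronecker, Matrix.det_kronecker,
      Matrix.det_one, one_pow, one_mul]
    exact ((hQΔdet.pow _).mul (hAdet.pow _)).pow _
  have hcQΔinv : cmplx QΔ⁻¹ = (cmplx QΔ)⁻¹ := by
    refine (Matrix.inv_eq_right_inv ?_).symm
    rw [← cmplx_mul, Matrix.mul_nonsing_inv QΔ ((Matrix.isUnit_iff_isUnit_det QΔ).mp hQΔ),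
      cmplx_one]
  have hTinfeq :
      (1 : Matrix (Fin L) (Fin L) ℂ) ⊗ₖ
        (cmplx ((1 : Matrix (Fin M) (Fin M) ℝ) - QΔ⁻¹ * Q) ⊗ₖ (1 : Matrix (Fin N) (Fin N) ℂ))
      = 1 - Bm⁻¹ * Km := by
    have h1 : Bm⁻¹ * Km = (1 : Matrix (Fin L) (Fin L) ℂ) ⊗ₖ
        (((cmplx QΔ)⁻¹ * cmplx Q) ⊗ₖ (1 : Matrix (Fin N) (Fin N) ℂ)) := by
      rw [hBm, hKm, Matrix.inv_kronecker, Matrix.inv_kronecker, inv_one,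
        ← Matrix.mul_kronecker_mul, ← Matrix.mul_kronecker_mul, one_mul,
        Matrix.nonsing_inv_mul A hAdet]
    have h2 : cmplx ((1 : Matrix (Fin M) (Fin M) ℝ) - QΔ⁻¹ * Q)
        = 1 - (cmplx QΔ)⁻¹ * cmplx Q := by
      rw [cmplx_sub, cmplx_one, cmplx_mul, hcQΔinv]
    rw [h1, h2]
    rw [kron_sub_left, kron_sub_right, Matrix.one_kronecker_one, Matrix.one_kronecker_one]
  -- transfer to the Banach algebra of continuous linear maps
  set φ := Matrix.toEuclideanCLM (𝕜 := ℂ) (n := Fin L × Fin M × Fin N) with hφ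
  have hφinv : ∀ X : Matrix (Fin L × Fin M × Fin N) (Fin L × Fin M × Fin N) ℂ,
      φ (Ring.inverse X) = Ring.inverse (φ X) := by
    intro X
    by_cases h : IsUnit X
    · have h1 : φ X * φ (Ring.inverse X) = 1 := by
        rw [← _root_.map_mul φ, Ring.mul_inverse_cancel X h, _root_.map_one φ]
      have h2 : φ (Ring.inverse X) * φ X = 1 := by
        rw [← _root_.map_mul φ, Ring.inverse_mul_cancel X h, _root_.map_one φ]
      exact (Ring.inverse_unit ⟨φ X, φ (Ring.inverse X), h1, h2⟩).symm
    · have h' : ¬ IsUnit (φ X) := by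
        intro hu
        refine h ?_
        have := hu.map φ.symm
        simpa using this
      rw [Ring.inverse_non_unit _ h, Ring.inverse_non_unit _ h', map_zero]
  have hφunit : ∀ X : Matrix (Fin L × Fin M × Fin N) (Fin L × Fin M × Fin N) ℂ,
      IsUnit X ↔ IsUnit (φ X) := by
    intro X
    constructor
    · exact fun h => h.map φ
    · intro hu
      have := hu.map φ.symm
      simpa using this
  obtain ⟨c, hc, μs, hμs, hkey⟩ := key_bound (φ Bm) (φ Km) (φ (EH L M N))
    ((hφunit Bm).mp hBunit)
  refine ⟨c, hc, μs, hμs, fun μ hμ => ?_⟩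
  obtain ⟨hU, hbound⟩ := hkey μ hμ
  have hP : Phat L QΔ A μ = 1 - (μ:ℂ) • Bm := rfl
  have hC : Cmat L Q A μ = 1 - (μ:ℂ) • Km - EH L M N := rfl
  have hφP : φ (Phat L QΔ A μ) = 1 - (μ:ℂ) • φ Bm := by
    rw [hP, _root_.map_sub φ, _root_.map_one φ, _root_.map_smul φ]
  constructor
  · rw [hφunit, hφP]
    exact hU
  · have hexpr : Tsmooth L Q QΔ A μ -
        (1 : Matrix (Fin L) (Fin L) ℂ) ⊗ₖ
          (cmplx ((1 : Matrix (Fin M) (Fin M) ℝ) - QΔ⁻¹ * Q) ⊗ₖ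
            (1 : Matrix (Fin N) (Fin N) ℂ))
        = (1 - (Phat L QΔ A μ)⁻¹ * Cmat L Q A μ) - (1 - Bm⁻¹ * Km) := by
      rw [hTinfeq]; rfl
    have : opNorm (Tsmooth L Q QΔ A μ -
        (1 : Matrix (Fin L) (Fin L) ℂ) ⊗ₖ
          (cmplx ((1 : Matrix (Fin M) (Fin M) ℝ) - QΔ⁻¹ * Q) ⊗ₖ
            (1 : Matrix (Fin N) (Fin N) ℂ)))
        = ‖(1 - Ring.inverse (1 - (μ:ℂ) • φ Bm) * (1 - (μ:ℂ) • φ Km - φ (EH L M N))) -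
            (1 - Ring.inverse (φ Bm) * φ Km)‖ := by
      rw [show opNorm (Tsmooth L Q QΔ A μ - _) = ‖φ (Tsmooth L Q QΔ A μ -
        (1 : Matrix (Fin L) (Fin L) ℂ) ⊗ₖ
          (cmplx ((1 : Matrix (Fin M) (Fin M) ℝ) - QΔ⁻¹ * Q) ⊗ₖ
            (1 : Matrix (Fin N) (Fin N) ℂ)))‖ from rfl]
      rw [hexpr]
      rw [Matrix.nonsing_inv_eq_ringInverse, Matrix.nonsing_inv_eq_ringInverse]
      simp only [_root_.map_sub, _root_.map_one, _root_.map_mul, _root_.map_smul, hφinv, hφP]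
      rw [hC, _root_.map_sub φ, _root_.map_sub φ, _root_.map_one φ, _root_.map_smul φ]
    rw [this]
    exact hbound
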